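/- With f, h, f_h as above, for all x, x̄ with |x| > h and |x̄| > h one has |f_h(x) - f_h(x̄)| ≤ (3 L_h + 1) |x - x̄|, provided |f(0)| ≤ h. -/

import Mathlib

theorem stmt_1 {d : ℕ}
    (f : EuclideanSpace ℝ (Fin d) → EuclideanSpace ℝ (Fin d))
    (h Lh : ℝ) (hh : 0 < h) (hLh : 0 < Lh)
    (hlip : ∀ x y : EuclideanSpace ℝ (Fin d),
      max ‖x‖ ‖y‖ ≤ h → ‖f x - f y‖ ≤ Lh * ‖x - y‖)
    (hf0 : ‖f 0‖ ≤ h) :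
    ∀ x y : EuclideanSpace ℝ (Fin d), h < ‖x‖ → h < ‖y‖ →
      ‖(‖x‖ / h) • f ((h / ‖x‖) • x) - (‖y‖ / h) • f ((h / ‖y‖) • y)‖
        ≤ (3 * Lh + 1) * ‖x - y‖ := by
  have key : ∀ x y : EuclideanSpace ℝ (Fin d), h < ‖x‖ → h < ‖y‖ → ‖y‖ ≤ ‖x‖ →
      ‖(‖x‖ / h) • f ((h / ‖x‖) • x) - (‖y‖ / h) • f ((h / ‖y‖) • y)‖
        ≤ (3 * Lh + 1) * ‖x - y‖ := by
    intro x y hx hy hxy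
    have ha0 : (0:ℝ) < ‖x‖ := hh.trans hx
    have hb0 : (0:ℝ) < ‖y‖ := hh.trans hy
    set a := ‖x‖ with ha
    set b := ‖y‖ with hb
    set u := (h / a) • x with hu
    set v := (h / b) • y with hv
    have hun : ‖u‖ = h := by
      rw [hu, norm_smul, Real.norm_eq_abs, abs_of_pos (div_pos hh ha0), ← ha]
      field_simp
    have hvn : ‖v‖ = h := by
      rw [hv, norm_smul, Real.norm_eq_abs, abs_of_pos (div_pos hh hb0), ← hb]
      field_simp
    have hab : |a - b| ≤ ‖x - y‖ := abs_norm_sub_norm_le x y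
    have hab' : a - b ≤ ‖x - y‖ := (le_abs_self _).trans hab
    have hfuv : ‖f u - f v‖ ≤ Lh * ‖u - v‖ := by
      apply hlip
      rw [hun, hvn]; simp
    -- bound on ‖u - v‖
    have hdec1 : u - v = (h / a) • (x - y) + (h / a - h / b) • y := by
      rw [hu, hv]; module
    have huv : ‖u - v‖ ≤ 2 * h / a * ‖x - y‖ := by
      rw [hdec1]
      have h1 : ‖(h / a) • (x - y)‖ = h / a * ‖x - y‖ := by
        rw [norm_smul, Real.norm_eq_abs, abs_of_pos (div_pos hh ha0)]
      have h2 : ‖(h / a - h / b) • y‖ ≤ h / a * ‖x - y‖ := by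
        rw [norm_smul, Real.norm_eq_abs, ← hb]
        have : |h / a - h / b| = h * (a - b) / (a * b) := by
          rw [abs_of_nonpos (by
            apply sub_nonpos.2
            exact div_le_div_of_nonneg_left hh.le hb0 hxy)]
          field_simp
          ring
        rw [this]
        have e : h * (a - b) / (a * b) * b = h / a * (a - b) := by
          field_simp
        rw [e]
        have := mul_le_mul_of_nonneg_left hab' (le_of_lt (div_pos hh ha0))
        linarith
      calc ‖(h / a) • (x - y) + (h / a - h / b) • y‖
          ≤ ‖(h / a) • (x - y)‖ + ‖(h / a - h / b) • y‖ := norm_add_le _ _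
        _ ≤ h / a * ‖x - y‖ + h / a * ‖x - y‖ := by rw [h1]; linarith
        _ = 2 * h / a * ‖x - y‖ := by ring
    have hfv : ‖f v‖ ≤ Lh * h + h := by
      have := hlip v 0 (by rw [hvn]; simp [hh.le])
      have h2 : ‖f v‖ ≤ ‖f v - f 0‖ + ‖f 0‖ := by
        have := norm_sub_norm_le (f v) (f 0)
        linarith [norm_sub_norm_le (f v) (f 0)]
      simp only [sub_zero] at this
      rw [hvn] at this
      linarith
    have hdec2 : (a / h) • f u - (b / h) • f v
        = (a / h) • (f u - f v) + ((a - b) / h) • f v := by module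
    rw [hdec2]
    have hA : ‖(a / h) • (f u - f v)‖ ≤ 2 * Lh * ‖x - y‖ := by
      rw [norm_smul, Real.norm_eq_abs, abs_of_pos (div_pos ha0 hh)]
      have : ‖f u - f v‖ ≤ Lh * (2 * h / a * ‖x - y‖) :=
        hfuv.trans (by nlinarith)
      calc a / h * ‖f u - f v‖ ≤ a / h * (Lh * (2 * h / a * ‖x - y‖)) := by
            apply mul_le_mul_of_nonneg_left this (le_of_lt (div_pos ha0 hh))
        _ = 2 * Lh * ‖x - y‖ := by field_simp
    have hB : ‖((a - b) / h) • f v‖ ≤ (Lh + 1) * ‖x - y‖ := by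
      rw [norm_smul, Real.norm_eq_abs, abs_div, abs_of_pos hh]
      calc |a - b| / h * ‖f v‖ ≤ ‖x - y‖ / h * (Lh * h + h) := by
            have h3 : |a - b| / h ≤ ‖x - y‖ / h := by gcongr
            exact mul_le_mul h3 hfv (norm_nonneg _) (by positivity)
        _ = (Lh + 1) * ‖x - y‖ := by field_simp
    calc ‖(a / h) • (f u - f v) + ((a - b) / h) • f v‖
        ≤ ‖(a / h) • (f u - f v)‖ + ‖((a - b) / h) • f v‖ := norm_add_le _ _
      _ ≤ 2 * Lh * ‖x - y‖ + (Lh + 1) * ‖x - y‖ := add_le_add hA hB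
      _ = (3 * Lh + 1) * ‖x - y‖ := by ring
  intro x y hx hy
  rcases le_total ‖y‖ ‖x‖ with hc | hc
  · exact key x y hx hy hc
  · rw [← norm_neg, neg_sub, ← norm_neg (x - y), neg_sub]
    exact key y x hy hx hc
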